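/- The low persistence filter achieves the removal of low-persistence features: for a signal ((V,E), f) over a finite connected graph and any BHT 𝔗, the 0-dimensional persistence diagram of (G, 𝓛₀^ε f) is equivalent (up to trivial intervals) to the submultiset of PD₀(G, f) consisting of intervals [a,b) with b − a ≥ ε. -/

import Mathlib

open scoped Classical

/-- A (multi)graph given by source and target maps on an edge type. -/
structure SrcTgtGraph (V E : Type*) where
  src : E → V
  tgt : E → V

namespace SrcTgtGraph

variable {V E : Type*} (G : SrcTgtGraph V E)

/-- `e` is an edge joining `x` and `y`. -/
def Ends (e : E) (x y : V) : Prop :=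
  (G.src e = x ∧ G.tgt e = y) ∨ (G.src e = y ∧ G.tgt e = x)

/-- The graph is connected. -/
def Connected : Prop :=
  ∀ a b : V, Relation.ReflTransGen (fun x y => ∃ e, G.Ends e x y) a b

/-- Extension of a vertex signal to vertices and edges, `f(e) = max f(V(e))`. -/
def sig (f : V → ℝ) : V ⊕ E → ℝ
  | .inl v => f v
  | .inr e => max (f (G.src e)) (f (G.tgt e))

/-- `pos` realizes a `G`-ordering: a total ordering of `V ⊕ E` along which the
signal is nondecreasing and every vertex precedes each edge incident to it. -/
def IsGOrdering (f : V → ℝ) (pos : V ⊕ E → ℕ) : Prop :=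
  Function.Injective pos ∧
  (∀ a b, pos a ≤ pos b → G.sig f a ≤ G.sig f b) ∧
  (∀ e : E, pos (.inl (G.src e)) < pos (.inr e) ∧ pos (.inl (G.tgt e)) < pos (.inr e))

/-- Connectivity within the subgraph `G_{<k}` of elements with position `< k`. -/
def ConnB (pos : V ⊕ E → ℕ) (k : ℕ) (a b : V) : Prop :=
  pos (.inl a) < k ∧ pos (.inl b) < k ∧
    Relation.ReflTransGen (fun x y => ∃ e, pos (.inr e) < k ∧ G.Ends e x y) a b

/-- `m` is the `≺`-minimum of the connected component of `v` in `G_{<k}`. -/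
def IsCompMin (pos : V ⊕ E → ℕ) (k : ℕ) (m v : V) : Prop :=
  G.ConnB pos k m v ∧ ∀ w, G.ConnB pos k v w → pos (.inl m) ≤ pos (.inl w)

/-- The `≺`-maximal endpoint of an edge. -/
def maxEnd (pos : V ⊕ E → ℕ) (e : E) : V :=
  if pos (.inl (G.src e)) ≤ pos (.inl (G.tgt e)) then G.tgt e else G.src e

/-- `(p, L)` is a basin hierarchy tree of the signal `(G, f)` with respect to the
`G`-ordering `pos`, rooted at the `≺`-minimal vertex `r`, with linking-vertex map `L`. -/
structure IsBHT (f : V → ℝ) (pos : V ⊕ E → ℕ) (r : V) (p : V → V) (L : V → V) : Prop where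
  ordering : G.IsGOrdering f pos
  root_min : ∀ v, pos (.inl r) ≤ pos (.inl v)
  root_fix : p r = r
  reaches : ∀ v, ∃ n, p^[n] v = r
  spec : ∀ v, v ≠ r → ∃ e : E,
    G.IsCompMin pos (pos (.inr e)) v v ∧
    G.IsCompMin pos (pos (.inr e) + 1) (p v) v ∧
    L v = G.maxEnd pos e

end SrcTgtGraph

/-- `u` is an ancestor of `v` in the tree with parent map `p` (`u ⪯_T v`). -/
def Anc {V : Type*} (p : V → V) (u v : V) : Prop := ∃ n, p^[n] v = u

/-- `f(𝔏(v))`, with value `+∞` at the root. -/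
noncomputable def fLink {V : Type*} (f : V → ℝ) (r : V) (L : V → V) (v : V) : EReal :=
  if v = r then ⊤ else (f (L v) : EReal)

/-- The persistence `pers(v) = f(𝔏(v)) - f(v)` of a vertex in a BHT. -/
noncomputable def persBHT {V : Type*} (f : V → ℝ) (r : V) (L : V → V) (v : V) : EReal :=
  fLink f r L v - (f v : EReal)

namespace SrcTgtGraph

variable {V E : Type*} (G : SrcTgtGraph V E)

/-- The component of `v` dies at the edge `e`: `v` is the minimum of its component
just before `e` is added, and no longer after. -/
def DiesAt (pos : V ⊕ E → ℕ) (v : V) (e : E) : Prop :=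
  G.IsCompMin pos (pos (.inr e)) v v ∧ ¬ G.IsCompMin pos (pos (.inr e) + 1) v v

/-- The death value of the component created by `v` (`+∞` if permanent). -/
noncomputable def deathVal (f : V → ℝ) (pos : V ⊕ E → ℕ) (v : V) : EReal :=
  if h : ∃ e, G.DiesAt pos v e then ((G.sig f (.inr h.choose) : ℝ) : EReal) else ⊤

/-- The degree-0 persistence diagram of `(G, f)`, as a multiset of intervals
`[birth, death)` (including trivial intervals). -/
noncomputable def PD0 [Fintype V] (f : V → ℝ) (pos : V ⊕ E → ℕ) : Multiset (EReal × EReal) :=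
  Finset.univ.val.map fun v : V => ((f v : EReal), G.deathVal f pos v)

end SrcTgtGraph

/-- The nontrivial part of a multiset of intervals. -/
noncomputable def nontriv (M : Multiset (EReal × EReal)) : Multiset (EReal × EReal) :=
  M.filter fun ab => ab.1 < ab.2

/-- The 0-low-persistence filter associated to a BHT `(p, L)` rooted at `r`. -/
noncomputable def LPF {V : Type*} [Fintype V] (f : V → ℝ) (r : V) (p L : V → V)
    (ε : ℝ) (v : V) : ℝ :=
  (insert (f v) ((Finset.univ.filter fun u => Anc p u v ∧ persBHT f r L u < (ε : EReal)).image
    fun u => f (L u))).max' (Finset.insert_nonempty _ _)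

section AuxGeneric

open SrcTgtGraph Sum Relation

set_option linter.unusedSectionVars false

variable {V E : Type*} [Fintype V] [Fintype E] {G : SrcTgtGraph V E}
variable {h : V → ℝ} {q : V ⊕ E → ℕ}

lemma ends_symm {e : E} {x y : V} (hxy : G.Ends e x y) : G.Ends e y x := by
  rcases hxy with ⟨h1, h2⟩ | ⟨h1, h2⟩
  · exact Or.inr ⟨h1, h2⟩
  · exact Or.inl ⟨h1, h2⟩

lemma connB_refl {k : ℕ} {v : V} (hv : q (.inl v) < k) : G.ConnB q k v v :=
  ⟨hv, hv, Relation.ReflTransGen.refl⟩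

lemma connB_symm {k : ℕ} {a b : V} (hab : G.ConnB q k a b) : G.ConnB q k b a := by
  refine ⟨hab.2.1, hab.1, ?_⟩
  refine (@Relation.ReflTransGen.stdSymm _ _ ⟨?_⟩).symm _ _ hab.2.2
  intro x y ⟨e, he, hxy⟩
  exact ⟨e, he, ends_symm hxy⟩

lemma connB_trans {k : ℕ} {a b c : V} (hab : G.ConnB q k a b) (hbc : G.ConnB q k b c) :
    G.ConnB q k a c :=
  ⟨hab.1, hbc.2.1, hab.2.2.trans hbc.2.2⟩

lemma connB_mono {k k' : ℕ} (hk : k ≤ k') {a b : V} (hab : G.ConnB q k a b) :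
    G.ConnB q k' a b := by
  refine ⟨lt_of_lt_of_le hab.1 hk, lt_of_lt_of_le hab.2.1 hk, ?_⟩
  refine Relation.ReflTransGen.mono ?_ _ _ hab.2.2
  intro x y ⟨e, he, hxy⟩
  exact ⟨e, lt_of_lt_of_le he hk, hxy⟩

lemma compMin_unique {k : ℕ} {m m' v v' : V} (hm : G.IsCompMin q k m v)
    (hm' : G.IsCompMin q k m' v') (hvv' : G.ConnB q k v v')
    (hinj : Function.Injective q) : m = m' := by
  have h1 : q (.inl m) ≤ q (.inl m') := hm.2 _ (connB_trans hvv' (connB_symm hm'.1))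
  have h2 : q (.inl m') ≤ q (.inl m) := hm'.2 _ (connB_trans (connB_symm hvv') (connB_symm hm.1))
  exact Sum.inl.inj (hinj (le_antisymm h1 h2))

lemma compMin_self {k : ℕ} {m v : V} (hm : G.IsCompMin q k m v) : G.IsCompMin q k m m := by
  refine ⟨connB_refl hm.1.1, fun w hw => hm.2 w (connB_trans (connB_symm hm.1) hw)⟩

lemma compMin_transfer {k : ℕ} {m v w : V} (hm : G.IsCompMin q k m v)
    (hvw : G.ConnB q k v w) : G.IsCompMin q k m w :=
  ⟨connB_trans hm.1 hvw, fun w' hw' => hm.2 w' (connB_trans hvw hw')⟩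

lemma compMin_mono_down {j k : ℕ} {v : V} (hvj : q (.inl v) < j) (hjk : j ≤ k)
    (hv : G.IsCompMin q k v v) : G.IsCompMin q j v v :=
  ⟨connB_refl hvj, fun w hw => hv.2 w (connB_mono hjk hw)⟩

lemma compMin_exists {k : ℕ} {v : V} (hv : q (.inl v) < k) :
    ∃ m, G.IsCompMin q k m v := by
  classical
  have hne : (Finset.univ.filter fun w => G.ConnB q k v w).Nonempty :=
    ⟨v, by simp [connB_refl hv]⟩
  obtain ⟨m, hmem, hmin⟩ := Finset.exists_min_image _ (fun w => q (.inl w)) hne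
  simp only [Finset.mem_filter, Finset.mem_univ, true_and] at hmem
  refine ⟨m, connB_symm hmem, fun w hw => ?_⟩
  exact hmin w (by simp only [Finset.mem_filter, Finset.mem_univ, true_and]; exact hw)

lemma vertex_birth_isolated (hq : G.IsGOrdering h q) (v : V) :
    G.IsCompMin q (q (.inl v) + 1) v v := by
  refine ⟨connB_refl (Nat.lt_succ_self _), fun w hw => ?_⟩
  -- the component of v at stage q v + 1 is {v}
  have : ∀ b, Relation.ReflTransGen
      (fun x y => ∃ e, q (.inr e) < q (.inl v) + 1 ∧ G.Ends e x y) v b → b = v := by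
    intro b hb
    induction hb with
    | refl => rfl
    | tail _ hstep ih =>
      rcases hstep with ⟨e, he, hends⟩
      exfalso
      subst ih
      have h1 := (hq.2.2 e).1
      have h2 := (hq.2.2 e).2
      rcases hends with ⟨hsrc, _⟩ | ⟨_, htgt⟩
      · rw [hsrc] at h1; omega
      · rw [htgt] at h2; omega
  have := this w hw.2.2
  subst this
  exact le_refl _

lemma diesAt_unique (hq : G.IsGOrdering h q) {v : V} {e e' : E}
    (he : G.DiesAt q v e) (he' : G.DiesAt q v e') : e = e' := by
  by_contra hne
  have hvlt : q (.inl v) < q (.inr e) := he.1.1.1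
  have hvlt' : q (.inl v) < q (.inr e') := he'.1.1.1
  rcases lt_trichotomy (q (.inr e)) (q (.inr e')) with hlt | heq | hgt
  · exact he.2 (compMin_mono_down (Nat.lt_succ_of_lt hvlt) hlt he'.1)
  · exact hne (by have := hq.1 heq; exact Sum.inr.inj this)
  · exact he'.2 (compMin_mono_down (Nat.lt_succ_of_lt hvlt') hgt he.1)

lemma exists_edge_at_of_min_break (hq : G.IsGOrdering h q) {v : V} {j : ℕ}
    (hj : G.IsCompMin q j v v) (hj1 : ¬ G.IsCompMin q (j + 1) v v) :
    ∃ e : E, q (.inr e) = j := by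
  by_contra hno
  push_neg at hno
  apply hj1
  refine ⟨connB_mono (Nat.le_succ _) hj.1, fun w hw => ?_⟩
  refine hj.2 w ?_
  refine ⟨hj.1.1, ?_, ?_⟩
  · -- w has position < j : if q (inl w) = j ... show via path
    rcases Nat.lt_succ_iff_lt_or_eq.mp hw.2.1 with h | h
    · exact h
    · -- w at position j; but w is connected to v, so either w = v or incident edge with pos < j+1 > q w
      exfalso
      have : ∀ b, Relation.ReflTransGen
          (fun x y => ∃ e, q (.inr e) < j + 1 ∧ G.Ends e x y) v b → b = w → False := by
        intro b hb
        induction hb with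
        | refl =>
          intro hvw
          have h2 := hj.1.1
          rw [hvw] at h2
          omega
        | tail _ hstep ih =>
          intro hbw
          rcases hstep with ⟨e, he, hends⟩
          subst hbw
          have hej : q (.inr e) < j := lt_of_le_of_ne (Nat.lt_succ_iff.mp he) (hno e)
          have h1 := (hq.2.2 e).1
          have h2 := (hq.2.2 e).2
          rcases hends with ⟨_, htgt⟩ | ⟨hsrc, _⟩
          · rw [htgt] at h2; omega
          · rw [hsrc] at h1; omega
      exact this w hw.2.2 rfl
  · refine Relation.ReflTransGen.mono ?_ _ _ hw.2.2
    intro x y ⟨e, he, hxy⟩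
    have : q (.inr e) < j := lt_of_le_of_ne (Nat.lt_succ_iff.mp he) (hno e)
    exact ⟨e, this, hxy⟩

end AuxGeneric
section AuxStage

open SrcTgtGraph Sum Relation

set_option linter.unusedSectionVars false

variable {V E : Type*} [Fintype V] [Fintype E] {G : SrcTgtGraph V E}
variable {h : V → ℝ} {q : V ⊕ E → ℕ}

/-- The stage covering exactly the elements of signal value `≤ t`. -/
noncomputable def stageK (G : SrcTgtGraph V E) (h : V → ℝ) (q : V ⊕ E → ℕ) (t : ℝ) : ℕ :=
  if (Finset.univ.filter fun x : V ⊕ E => G.sig h x ≤ t).Nonempty then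
    ((Finset.univ.filter fun x : V ⊕ E => G.sig h x ≤ t).sup q) + 1 else 0

lemma stageK_iff (hq : G.IsGOrdering h q) (t : ℝ) (x : V ⊕ E) :
    q x < stageK G h q t ↔ G.sig h x ≤ t := by
  unfold stageK
  split_ifs with H
  · constructor
    · intro hx
      obtain ⟨x₀, hx₀mem, hx₀⟩ := Finset.exists_mem_eq_sup _ H q
      rw [hx₀] at hx
      have : q x ≤ q x₀ := Nat.lt_succ_iff.mp hx
      have := hq.2.1 x x₀ this
      simp only [Finset.mem_filter, Finset.mem_univ, true_and] at hx₀mem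
      linarith
    · intro hx
      have : x ∈ Finset.univ.filter fun x : V ⊕ E => G.sig h x ≤ t := by
        simp only [Finset.mem_filter, Finset.mem_univ, true_and]; exact hx
      exact Nat.lt_succ_of_le (Finset.le_sup this)
  · constructor
    · omega
    · intro hx
      exact absurd ⟨x, by simp only [Finset.mem_filter, Finset.mem_univ, true_and]; exact hx⟩ H

lemma deathVal_lt_iff (hq : G.IsGOrdering h q) {v : V} {t : ℝ} (hv : h v ≤ t) :
    (t : EReal) < G.deathVal h q v ↔ G.IsCompMin q (stageK G h q t) v v := by
  have hvK : q (.inl v) < stageK G h q t := (stageK_iff hq t (.inl v)).mpr hv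
  constructor
  · -- contrapositive
    intro hd
    by_contra hmin
    -- find failure stage
    have hbase : G.IsCompMin q (q (.inl v) + 1) v v := vertex_birth_isolated hq v
    have hex : ∃ i, ¬ G.IsCompMin q (q (.inl v) + 1 + i) v v := by
      refine ⟨stageK G h q t - (q (.inl v) + 1), ?_⟩
      have : q (.inl v) + 1 + (stageK G h q t - (q (.inl v) + 1)) = stageK G h q t := by omega
      rw [this]; exact hmin
    classical
    have hnz : Nat.find hex ≠ 0 := by
      intro h0
      have := Nat.find_spec hex
      rw [h0, Nat.add_zero] at this
      exact this hbase
    obtain ⟨i', hi'⟩ := Nat.exists_eq_succ_of_ne_zero hnz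
    have hprev : G.IsCompMin q (q (.inl v) + 1 + i') v v :=
      not_not.mp (Nat.find_min hex (by omega))
    have hbreak : ¬ G.IsCompMin q (q (.inl v) + 1 + i' + 1) v v := by
      have := Nat.find_spec hex
      rw [hi'] at this
      have heq : q (.inl v) + 1 + (i' + 1) = q (.inl v) + 1 + i' + 1 := by omega
      rwa [heq] at this
    obtain ⟨e, he⟩ := exists_edge_at_of_min_break hq hprev hbreak
    have hdies : G.DiesAt q v e := by
      constructor
      · rw [he]; exact hprev
      · rw [he]; exact hbreak
    have hdex : ∃ e, G.DiesAt q v e := ⟨e, hdies⟩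
    have hchoose : hdex.choose = e := diesAt_unique hq hdex.choose_spec hdies
    have hfindle : Nat.find hex ≤ stageK G h q t - (q (.inl v) + 1) := by
      apply Nat.find_min'
      have heq : q (.inl v) + 1 + (stageK G h q t - (q (.inl v) + 1)) = stageK G h q t := by
        omega
      rw [heq]; exact hmin
    have hlt : q (.inr e) < stageK G h q t := by rw [he]; omega
    have hsig : G.sig h (.inr e) ≤ t := (stageK_iff hq t _).mp hlt
    rw [SrcTgtGraph.deathVal, dif_pos hdex, hchoose] at hd
    have := EReal.coe_lt_coe_iff.mp hd
    linarith
  · intro hmin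
    unfold SrcTgtGraph.deathVal
    split_ifs with hd
    · have hspec := hd.choose_spec
      rw [EReal.coe_lt_coe_iff]
      by_contra hle
      push_neg at hle
      have : q (.inr hd.choose) < stageK G h q t := (stageK_iff hq t _).mpr hle
      have h1 : q (.inl v) < q (.inr hd.choose) + 1 := Nat.lt_succ_of_lt hspec.1.1.1
      exact hspec.2 (compMin_mono_down h1 this hmin)
    · exact EReal.coe_lt_top t

end AuxStage
section AuxCount

open SrcTgtGraph Sum Relation

set_option linter.unusedSectionVars false

variable {V E : Type*} [Fintype V] [Fintype E] {G : SrcTgtGraph V E}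
variable {h : V → ℝ} {q : V ⊕ E → ℕ}

/-- Connectivity in the sublevel graph at level `t`. -/
def sConn (G : SrcTgtGraph V E) (h : V → ℝ) (t : ℝ) : V → V → Prop :=
  Relation.ReflTransGen (fun x y => ∃ e, G.sig h (.inr e) ≤ t ∧ G.Ends e x y)

lemma sConn_refl (G : SrcTgtGraph V E) (h : V → ℝ) (t : ℝ) (v : V) : sConn G h t v v :=
  Relation.ReflTransGen.refl

lemma sConn_symm {t : ℝ} {a b : V} (hab : sConn G h t a b) : sConn G h t b a := by
  refine (@Relation.ReflTransGen.stdSymm _ _ ⟨?_⟩).symm _ _ hab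
  intro x y ⟨e, he, hxy⟩
  exact ⟨e, he, ends_symm hxy⟩

lemma sConn_trans {t : ℝ} {a b c : V} (hab : sConn G h t a b) (hbc : sConn G h t b c) :
    sConn G h t a c := hab.trans hbc

/-- The setoid of sublevel connectivity on `{h ≤ s}`. -/
def lowSetoid (G : SrcTgtGraph V E) (h : V → ℝ) (s t : ℝ) : Setoid {v : V // h v ≤ s} :=
  ⟨fun a b => sConn G h t a.1 b.1,
    ⟨fun a => sConn_refl G h t a.1, sConn_symm, sConn_trans⟩⟩

lemma sConn_to_connB (hq : G.IsGOrdering h q) {t : ℝ} {a b : V}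
    (ha : h a ≤ t) (hb : h b ≤ t) (hab : sConn G h t a b) :
    G.ConnB q (stageK G h q t) a b := by
  refine ⟨(stageK_iff hq t (.inl a)).mpr ha, (stageK_iff hq t (.inl b)).mpr hb, ?_⟩
  refine Relation.ReflTransGen.mono ?_ _ _ hab
  intro x y ⟨e, he, hxy⟩
  exact ⟨e, (stageK_iff hq t (.inr e)).mpr he, hxy⟩

lemma connB_to_sConn (hq : G.IsGOrdering h q) {t : ℝ} {a b : V}
    (hab : G.ConnB q (stageK G h q t) a b) : sConn G h t a b := by
  refine Relation.ReflTransGen.mono ?_ _ _ hab.2.2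
  intro x y ⟨e, he, hxy⟩
  exact ⟨e, (stageK_iff hq t (.inr e)).mp he, hxy⟩

/-- Step 2: the count of alive-at-`t` points born by `s` equals the number of
components of the sublevel graph at `t` meeting `{h ≤ s}`. -/
lemma count_death (hq : G.IsGOrdering h q) (s t : ℝ) (hst : s ≤ t) :
    (Finset.univ.filter fun v => h v ≤ s ∧ (t : EReal) < G.deathVal h q v).card
      = Nat.card (Quotient (lowSetoid G h s t)) := by
  classical
  set A := Finset.univ.filter fun v => h v ≤ s ∧ (t : EReal) < G.deathVal h q v with hA
  have hmemA : ∀ v, v ∈ A ↔ h v ≤ s ∧ (t : EReal) < G.deathVal h q v := by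
    intro v; simp [hA]
  let φ : {x // x ∈ A} → Quotient (lowSetoid G h s t) := fun x =>
    Quotient.mk _ ⟨x.1, ((hmemA x.1).mp x.2).1⟩
  have hbij : Function.Bijective φ := by
    constructor
    · rintro ⟨x, hx⟩ ⟨y, hy⟩ hxy
      have hrel : sConn G h t x y := Quotient.exact hxy
      obtain ⟨hxs, hxd⟩ := (hmemA x).mp hx
      obtain ⟨hys, hyd⟩ := (hmemA y).mp hy
      have hconn : G.ConnB q (stageK G h q t) x y :=
        sConn_to_connB hq (le_trans hxs hst) (le_trans hys hst) hrel
      have hxmin := (deathVal_lt_iff hq (le_trans hxs hst)).mp hxd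
      have hymin := (deathVal_lt_iff hq (le_trans hys hst)).mp hyd
      exact Subtype.ext (compMin_unique hxmin hymin hconn hq.1)
    · intro c
      obtain ⟨⟨w, hw⟩, rfl⟩ := Quotient.exists_rep c
      have hwK : q (.inl w) < stageK G h q t := (stageK_iff hq t (.inl w)).mpr (le_trans hw hst)
      obtain ⟨m, hm⟩ := compMin_exists (G := G) hwK
      have hqm : q (.inl m) ≤ q (.inl w) := hm.2 w (connB_refl (G := G) hwK)
      have hfm : h m ≤ h w := hq.2.1 (.inl m) (.inl w) hqm
      have hms : h m ≤ s := le_trans hfm hw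
      have hmd : (t : EReal) < G.deathVal h q m :=
        (deathVal_lt_iff hq (le_trans hms hst)).mpr (compMin_self hm)
      refine ⟨⟨m, (hmemA m).mpr ⟨hms, hmd⟩⟩, ?_⟩
      apply Quotient.sound
      exact connB_to_sConn hq hm.1
  calc A.card = Nat.card {x // x ∈ A} := by
        rw [Nat.card_eq_fintype_card, Fintype.card_coe]
    _ = Nat.card (Quotient (lowSetoid G h s t)) := Nat.card_eq_of_bijective φ hbij

end AuxCount
section AuxBHT

open SrcTgtGraph Sum Relation

set_option linter.unusedSectionVars false

variable {V E : Type*} [Fintype V] [Fintype E] {G : SrcTgtGraph V E}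
variable {f : V → ℝ} {pos : V ⊕ E → ℕ} {r : V} {p L : V → V}

/-- The edge at which the component of `v` dies. -/
noncomputable def dedge (hbht : G.IsBHT f pos r p L) (v : V) (hv : v ≠ r) : E :=
  (hbht.spec v hv).choose

lemma dedge_spec1 (hbht : G.IsBHT f pos r p L) {v : V} (hv : v ≠ r) :
    G.IsCompMin pos (pos (.inr (dedge hbht v hv))) v v := (hbht.spec v hv).choose_spec.1

lemma dedge_spec2 (hbht : G.IsBHT f pos r p L) {v : V} (hv : v ≠ r) :
    G.IsCompMin pos (pos (.inr (dedge hbht v hv)) + 1) (p v) v :=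
  (hbht.spec v hv).choose_spec.2.1

lemma dedge_spec3 (hbht : G.IsBHT f pos r p L) {v : V} (hv : v ≠ r) :
    L v = G.maxEnd pos (dedge hbht v hv) := (hbht.spec v hv).choose_spec.2.2

lemma p_ne (hbht : G.IsBHT f pos r p L) {v : V} (hv : v ≠ r) : p v ≠ v := by
  intro hpv
  obtain ⟨n, hn⟩ := hbht.reaches v
  rw [Function.iterate_fixed hpv n] at hn
  exact hv hn

lemma root_compMin (hbht : G.IsBHT f pos r p L) {k : ℕ} (hk : pos (.inl r) < k) :
    G.IsCompMin pos k r r := ⟨connB_refl hk, fun w _ => hbht.root_min w⟩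

lemma not_compMin_after (hbht : G.IsBHT f pos r p L) {v : V} (hv : v ≠ r) :
    ¬ G.IsCompMin pos (pos (.inr (dedge hbht v hv)) + 1) v v := by
  intro hmin
  have h2 := dedge_spec2 hbht hv
  have := compMin_unique hmin h2 (connB_refl hmin.1.1) hbht.ordering.1
  exact p_ne hbht hv this.symm

lemma diesAt_dedge (hbht : G.IsBHT f pos r p L) {v : V} (hv : v ≠ r) :
    G.DiesAt pos v (dedge hbht v hv) := ⟨dedge_spec1 hbht hv, not_compMin_after hbht hv⟩

lemma fL_eq_sig (hbht : G.IsBHT f pos r p L) {v : V} (hv : v ≠ r) :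
    f (L v) = G.sig f (.inr (dedge hbht v hv)) := by
  rw [dedge_spec3 hbht hv]
  set e := dedge hbht v hv
  unfold SrcTgtGraph.maxEnd SrcTgtGraph.sig
  split_ifs with hc
  · have := hbht.ordering.2.1 (.inl (G.src e)) (.inl (G.tgt e)) hc
    simp only [SrcTgtGraph.sig] at this
    exact (max_eq_right this).symm
  · push_neg at hc
    have := hbht.ordering.2.1 (.inl (G.tgt e)) (.inl (G.src e)) (le_of_lt hc)
    simp only [SrcTgtGraph.sig] at this
    exact (max_eq_left this).symm

lemma deathVal_eq_fLink (hbht : G.IsBHT f pos r p L) (v : V) :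
    G.deathVal f pos v = fLink f r L v := by
  by_cases hv : v = r
  · subst hv
    rw [fLink, if_pos rfl, SrcTgtGraph.deathVal, dif_neg]
    rintro ⟨e, he⟩
    have hposr : pos (.inl v) < pos (.inr e) + 1 := Nat.lt_succ_of_lt he.1.1.1
    -- v = r is always a component minimum
    exact he.2 (root_compMin hbht hposr)
  · have hdex : ∃ e, G.DiesAt pos v e := ⟨dedge hbht v hv, diesAt_dedge hbht hv⟩
    rw [SrcTgtGraph.deathVal, dif_pos hdex, fLink, if_neg hv]
    have : hdex.choose = dedge hbht v hv :=
      diesAt_unique hbht.ordering hdex.choose_spec (diesAt_dedge hbht hv)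
    rw [this, fL_eq_sig hbht hv]

lemma pos_p_le (hbht : G.IsBHT f pos r p L) (v : V) :
    pos (.inl (p v)) ≤ pos (.inl v) := by
  by_cases hv : v = r
  · subst hv; rw [hbht.root_fix]
  · have h2 := dedge_spec2 hbht hv
    exact h2.2 v (connB_refl (G := G) (Nat.lt_succ_of_lt (dedge_spec1 hbht hv).1.1))

lemma f_p_le (hbht : G.IsBHT f pos r p L) (v : V) : f (p v) ≤ f v :=
  hbht.ordering.2.1 (.inl (p v)) (.inl v) (pos_p_le hbht v)

lemma f_anc_le (hbht : G.IsBHT f pos r p L) {u v : V} (h : Anc p u v) : f u ≤ f v := by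
  obtain ⟨n, rfl⟩ := h
  induction n with
  | zero => exact le_refl _
  | succ n ih =>
    rw [Function.iterate_succ_apply']
    exact le_trans (f_p_le hbht _) ih

lemma master (hbht : G.IsBHT f pos r p L) :
    ∀ n v, p^[n] v = r → ∀ k, pos (.inl v) < k →
      ∃ m, G.IsCompMin pos k (p^[m] v) v ∧
        ∀ i < m, ∃ (hi : p^[i] v ≠ r), pos (.inr (dedge hbht (p^[i] v) hi)) < k := by
  intro n
  induction n with
  | zero =>
    intro v hn k hk
    refine ⟨0, ?_, by omega⟩
    simp only [Function.iterate_zero_apply] at hn ⊢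
    subst hn
    exact root_compMin hbht hk
  | succ n ih =>
    intro v hn k hk
    by_cases hvr : v = r
    · refine ⟨0, ?_, by omega⟩
      simp only [Function.iterate_zero_apply]
      subst hvr
      exact root_compMin hbht hk
    · by_cases hkle : k ≤ pos (.inr (dedge hbht v hvr))
      · refine ⟨0, ?_, by omega⟩
        simp only [Function.iterate_zero_apply]
        exact compMin_mono_down hk hkle (dedge_spec1 hbht hvr)
      · push_neg at hkle
        have hconn : G.ConnB pos k v (p v) :=
          connB_mono hkle (connB_symm (dedge_spec2 hbht hvr).1)
        have hpn : p^[n] (p v) = r := by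
          rw [← Function.iterate_succ_apply]; exact hn
        have hpk : pos (.inl (p v)) < k := lt_of_le_of_lt (pos_p_le hbht v) hk
        obtain ⟨m', hmin', hside'⟩ := ih (p v) hpn k hpk
        refine ⟨m' + 1, ?_, ?_⟩
        · rw [Function.iterate_succ_apply]
          exact compMin_transfer hmin' (connB_symm hconn)
        · intro i hi
          match i with
          | 0 =>
            refine ⟨hvr, ?_⟩
            simpa using hkle
          | Nat.succ i' =>
            obtain ⟨hi'', hpos''⟩ := hside' i' (by omega)
            rw [Function.iterate_succ_apply]
            exact ⟨hi'', hpos''⟩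

lemma anc_of_compMin (hbht : G.IsBHT f pos r p L) {v : V} {k : ℕ} {m : V}
    (hk : pos (.inl v) < k) (hm : G.IsCompMin pos k m v) {u : V} {j : ℕ}
    (hj : p^[j] v = u)
    (hu : u = r ∨ ∀ (hur : u ≠ r), k ≤ pos (.inr (dedge hbht u hur))) :
    Anc p u m := by
  subst hj
  obtain ⟨n, hn⟩ := hbht.reaches v
  obtain ⟨m', hmin', hside'⟩ := master hbht n v hn k hk
  have hmm : m = p^[m'] v := compMin_unique hm hmin' (connB_refl hk) hbht.ordering.1
  by_cases hjm : j < m'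
  · exfalso
    obtain ⟨hi, hpos⟩ := hside' j hjm
    rcases hu with hur | hular
    · exact hi hur
    · have := hular hi
      omega
  · refine ⟨j - m', ?_⟩
    rw [hmm, ← Function.iterate_add_apply]
    rw [show j - m' + m' = j by omega]

lemma death_pos_lt (hbht : G.IsBHT f pos r p L) {v : V} (hv : v ≠ r) (hpv : p v ≠ r) :
    pos (.inr (dedge hbht v hv)) < pos (.inr (dedge hbht (p v) hpv)) := by
  by_contra hle
  push_neg at hle
  have h2 : G.IsCompMin pos (pos (.inr (dedge hbht v hv)) + 1) (p v) (p v) :=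
    compMin_self (dedge_spec2 hbht hv)
  have hposp : pos (.inl (p v)) < pos (.inr (dedge hbht (p v) hpv)) + 1 :=
    Nat.lt_succ_of_lt (dedge_spec1 hbht hpv).1.1
  exact not_compMin_after hbht hpv
    (compMin_mono_down hposp (by omega) h2)

lemma fLink_le_p (hbht : G.IsBHT f pos r p L) (v : V) :
    fLink f r L v ≤ fLink f r L (p v) := by
  by_cases hv : v = r
  · subst hv; rw [hbht.root_fix]
  · by_cases hpv : p v = r
    · have h1 : fLink f r L (p v) = ⊤ := by rw [fLink, if_pos hpv]
      rw [h1]; exact le_top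
    · have h1 : fLink f r L (p v) = ((f (L (p v)) : ℝ) : EReal) := by
        rw [fLink, if_neg hpv]
      rw [fLink, if_neg hv, h1, EReal.coe_le_coe_iff]
      rw [fL_eq_sig hbht hv, fL_eq_sig hbht hpv]
      exact hbht.ordering.2.1 _ _ (le_of_lt (death_pos_lt hbht hv hpv))

lemma fLink_anc (hbht : G.IsBHT f pos r p L) {u v : V} (h : Anc p u v) :
    fLink f r L v ≤ fLink f r L u := by
  obtain ⟨n, rfl⟩ := h
  induction n with
  | zero => exact le_refl _
  | succ n ih =>
    rw [Function.iterate_succ_apply']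
    exact le_trans ih (fLink_le_p hbht _)

lemma pers_root_not_lt (f : V → ℝ) (r : V) (L : V → V) (ε : ℝ) :
    ¬ (persBHT f r L r < (ε : EReal)) := by
  rw [persBHT, fLink, if_pos rfl, EReal.top_sub_coe]
  exact not_top_lt

lemma ne_root_of_pers_lt {f : V → ℝ} {r : V} {L : V → V} {ε : ℝ} {v : V}
    (h : persBHT f r L v < (ε : EReal)) : v ≠ r := by
  intro hv; subst hv; exact pers_root_not_lt f v L ε h

lemma pers_lt_iff {f : V → ℝ} {r : V} {L : V → V} {ε : ℝ} {v : V} (hv : v ≠ r) :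
    persBHT f r L v < (ε : EReal) ↔ f (L v) - f v < ε := by
  rw [persBHT, fLink, if_neg hv, ← EReal.coe_sub, EReal.coe_lt_coe_iff]

lemma pers_le_iff {f : V → ℝ} {r : V} {L : V → V} {ε : ℝ} {v : V} (hv : v ≠ r) :
    (ε : EReal) ≤ persBHT f r L v ↔ ε ≤ f (L v) - f v := by
  rw [persBHT, fLink, if_neg hv, ← EReal.coe_sub, EReal.coe_le_coe_iff]

end AuxBHT
section AuxLPF

open SrcTgtGraph Sum Relation

set_option linter.unusedSectionVars false

variable {V E : Type*} [Fintype V] [Fintype E] {G : SrcTgtGraph V E}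
variable {f : V → ℝ} {pos : V ⊕ E → ℕ} {r : V} {p L : V → V} {ε : ℝ}

lemma anc_refl (p : V → V) (v : V) : Anc p v v := ⟨0, rfl⟩

lemma anc_p (p : V → V) (v : V) : Anc p (p v) v := ⟨1, rfl⟩

lemma anc_trans {p : V → V} {u v w : V} (huv : Anc p u v) (hwu : Anc p w u) :
    Anc p w v := by
  obtain ⟨n, rfl⟩ := huv
  obtain ⟨m, rfl⟩ := hwu
  exact ⟨m + n, (Function.iterate_add_apply p m n v)⟩

lemma lpf_ge_f (v : V) : f v ≤ LPF f r p L ε v :=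
  Finset.le_max' _ _ (Finset.mem_insert_self _ _)

lemma lpf_ge_link {u v : V} (hu : Anc p u v) (hpers : persBHT f r L u < (ε : EReal)) :
    f (L u) ≤ LPF f r p L ε v := by
  apply Finset.le_max'
  apply Finset.mem_insert_of_mem
  exact Finset.mem_image_of_mem _ (by simp [hu, hpers])

lemma lpf_le_iff {v : V} {c : ℝ} :
    LPF f r p L ε v ≤ c ↔
      f v ≤ c ∧ ∀ u, Anc p u v → persBHT f r L u < (ε : EReal) → f (L u) ≤ c := by
  rw [LPF, Finset.max'_le_iff]
  constructor
  · intro H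
    refine ⟨H _ (Finset.mem_insert_self _ _), fun u hu hpers => ?_⟩
    exact H _ (Finset.mem_insert_of_mem (Finset.mem_image_of_mem _ (by simp [hu, hpers])))
  · intro ⟨h1, h2⟩ y hy
    rcases Finset.mem_insert.mp hy with rfl | hy
    · exact h1
    · obtain ⟨u, hu, rfl⟩ := Finset.mem_image.mp hy
      simp only [Finset.mem_filter, Finset.mem_univ, true_and] at hu
      exact h2 u hu.1 hu.2

lemma lpf_eq_f_of_high (hbht : G.IsBHT f pos r p L) {v : V}
    (hv : (ε : EReal) ≤ persBHT f r L v) : LPF f r p L ε v = f v := by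
  refine le_antisymm (lpf_le_iff.mpr ⟨le_refl _, fun u hu hpers => ?_⟩) (lpf_ge_f v)
  exfalso
  have hur : u ≠ r := ne_root_of_pers_lt hpers
  by_cases hvr : v = r
  · have h1 : fLink f r L u = ⊤ := by
      refine top_le_iff.mp ?_
      calc (⊤ : EReal) = fLink f r L v := by rw [fLink, if_pos hvr]
        _ ≤ fLink f r L u := fLink_anc hbht hu
    rw [fLink, if_neg hur] at h1
    exact (EReal.coe_lt_top _).ne h1
  · have h1 : f (L v) ≤ f (L u) := by
      have := fLink_anc hbht hu
      rw [fLink, if_neg hvr, fLink, if_neg hur] at this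
      exact EReal.coe_le_coe_iff.mp this
    have h2 : ε ≤ f (L v) - f v := (pers_le_iff hvr).mp hv
    have h3 : f (L u) - f u < ε := (pers_lt_iff hur).mp hpers
    have h4 : f u ≤ f v := f_anc_le hbht hu
    linarith

lemma lpf_p_le (hbht : G.IsBHT f pos r p L) (v : V) :
    LPF f r p L ε (p v) ≤ LPF f r p L ε v := by
  refine lpf_le_iff.mpr ⟨le_trans (f_p_le hbht v) (lpf_ge_f v), fun u hu hpers => ?_⟩
  exact lpf_ge_link (anc_trans (anc_p p v) hu) hpers

/-- Every vertex in the merged component at the death of `v` has low filtered value. -/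
lemma endpoint_g_le (hbht : G.IsBHT f pos r p L) {v : V} (hv : v ≠ r) {t : ℝ}
    (hsig : G.sig f (.inr (dedge hbht v hv)) ≤ t)
    (hgv : LPF f r p L ε v ≤ t) {z : V}
    (hz : G.ConnB pos (pos (.inr (dedge hbht v hv)) + 1) v z) :
    LPF f r p L ε z ≤ t := by
  set e := dedge hbht v hv with he
  set k := pos (.inr e) + 1 with hk
  have hzk : pos (.inl z) < k := hz.2.1
  have hfz : f z ≤ t := by
    have h1 : pos (.inl z) ≤ pos (.inr e) := by omega
    have := hbht.ordering.2.1 (.inl z) (.inr e) h1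
    calc f z = G.sig f (.inl z) := rfl
      _ ≤ G.sig f (.inr e) := this
      _ ≤ t := hsig
  refine lpf_le_iff.mpr ⟨hfz, fun u hu hpers => ?_⟩
  by_contra hlt
  push_neg at hlt
  have hur : u ≠ r := ne_root_of_pers_lt hpers
  -- the death edge of u comes at stage ≥ k
  have hposu : k ≤ pos (.inr (dedge hbht u hur)) := by
    by_contra hcon
    push_neg at hcon
    have h1 : pos (.inr (dedge hbht u hur)) ≤ pos (.inr e) := by omega
    have h2 := hbht.ordering.2.1 (.inr (dedge hbht u hur)) (.inr e) h1
    rw [← fL_eq_sig hbht hur] at h2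
    linarith
  -- the component minimum of z's component at stage k
  obtain ⟨m, hm⟩ := compMin_exists (G := G) hzk
  obtain ⟨j, hj⟩ := hu
  have hanc_um : Anc p u m :=
    anc_of_compMin hbht hzk hm hj (Or.inr fun hur' => hposu)
  -- m is also the component minimum of v's component, hence an ancestor of v
  have hvk : pos (.inl v) < k := hz.1
  have hmv : G.IsCompMin pos k m v := compMin_transfer hm (connB_symm hz)
  obtain ⟨n, hn⟩ := hbht.reaches v
  obtain ⟨m', hmin', _⟩ := master hbht n v hn k hvk
  have hmm : m = p^[m'] v := compMin_unique hmv hmin' (connB_refl hvk) hbht.ordering.1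
  have hanc_mv : Anc p m v := ⟨m', hmm.symm⟩
  have : f (L u) ≤ LPF f r p L ε v := lpf_ge_link (anc_trans hanc_mv hanc_um) hpers
  linarith

/-- The merge path of `v` transfers to a path in the sublevel filtration of the LPF. -/
lemma path_transfer (hbht : G.IsBHT f pos r p L) {v : V} (hv : v ≠ r) {t : ℝ}
    (hsig : G.sig f (.inr (dedge hbht v hv)) ≤ t)
    (hgv : LPF f r p L ε v ≤ t) :
    sConn G (LPF f r p L ε) t v (p v) := by
  set e := dedge hbht v hv with he
  set k := pos (.inr e) + 1 with hk
  have hvk : pos (.inl v) < k := Nat.lt_succ_of_lt (dedge_spec1 hbht hv).1.1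
  have hpath : G.ConnB pos k v (p v) := connB_symm (dedge_spec2 hbht hv).1
  -- transfer the path
  have main : ∀ b, Relation.ReflTransGen
      (fun x y => ∃ e', pos (.inr e') < k ∧ G.Ends e' x y) v b →
      sConn G (LPF f r p L ε) t v b ∧ pos (.inl b) < k := by
    intro b hb
    induction hb with
    | refl => exact ⟨Relation.ReflTransGen.refl, hvk⟩
    | @tail b c hab hstep ih =>
      obtain ⟨e', he', hends⟩ := hstep
      have hbk : pos (.inl b) < k := ih.2
      have hck : pos (.inl c) < k := by
        have h1 := (hbht.ordering.2.2 e').1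
        have h2 := (hbht.ordering.2.2 e').2
        rcases hends with ⟨hs, ht'⟩ | ⟨hs, ht'⟩
        · rw [← ht']; omega
        · rw [← hs]; omega
      have hconnb : G.ConnB pos k v b := ⟨hvk, hbk, hab⟩
      have hconnc : G.ConnB pos k v c :=
        connB_trans hconnb ⟨hbk, hck, Relation.ReflTransGen.single ⟨e', he', hends⟩⟩
      have hgb : LPF f r p L ε b ≤ t := endpoint_g_le hbht hv hsig hgv hconnb
      have hgc : LPF f r p L ε c ≤ t := endpoint_g_le hbht hv hsig hgv hconnc
      have hsig' : G.sig (LPF f r p L ε) (.inr e') ≤ t := by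
        have hsrc : LPF f r p L ε (G.src e') ≤ t := by
          rcases hends with ⟨hs, _⟩ | ⟨hs, _⟩
          · rw [hs]; exact hgb
          · rw [hs]; exact hgc
        have htgt : LPF f r p L ε (G.tgt e') ≤ t := by
          rcases hends with ⟨_, ht'⟩ | ⟨_, ht'⟩
          · rw [ht']; exact hgc
          · rw [ht']; exact hgb
        exact max_le hsrc htgt
      exact ⟨ih.1.tail ⟨e', hsig', hends⟩, hck⟩
  exact (main (p v) hpath.2.2).1

/-- Claim B: a low vertex connects in the LPF sublevel graph to its first
high-death ancestor. -/
lemma claimB (hbht : G.IsBHT f pos r p L) {t : ℝ} :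
    ∀ (i : ℕ) (x : V), (∀ j < i, fLink f r L (p^[j] x) ≤ (t : EReal)) →
      LPF f r p L ε x ≤ t → sConn G (LPF f r p L ε) t x (p^[i] x) := by
  intro i
  induction i with
  | zero => intro x _ _; exact Relation.ReflTransGen.refl
  | succ i ih =>
    intro x hmin hgx
    have hflx : fLink f r L x ≤ (t : EReal) := by
      have := hmin 0 (by omega)
      simpa using this
    have hxr : x ≠ r := by
      intro hx; subst hx
      rw [fLink, if_pos rfl] at hflx
      exact absurd hflx (not_le.mpr (EReal.coe_lt_top t))
    have hsig : G.sig f (.inr (dedge hbht x hxr)) ≤ t := by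
      rw [fLink, if_neg hxr] at hflx
      rw [← fL_eq_sig hbht hxr]
      exact EReal.coe_le_coe_iff.mp hflx
    have step1 : sConn G (LPF f r p L ε) t x (p x) := path_transfer hbht hxr hsig hgx
    have hmin' : ∀ j < i, fLink f r L (p^[j] (p x)) ≤ (t : EReal) := by
      intro j hj
      rw [← Function.iterate_succ_apply]
      exact hmin (j + 1) (by omega)
    have hgpx : LPF f r p L ε (p x) ≤ t := le_trans (lpf_p_le hbht x) hgx
    have step2 := ih (p x) hmin' hgpx
    rw [← Function.iterate_succ_apply] at step2
    exact step1.trans step2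

end AuxLPF
section AuxStep3

open SrcTgtGraph Sum Relation

set_option linter.unusedSectionVars false

variable {V E : Type*} [Fintype V] [Fintype E] {G : SrcTgtGraph V E}
variable {f : V → ℝ} {pos : V ⊕ E → ℕ} {r : V} {p L : V → V} {ε : ℝ}

lemma sConn_lpf_to_f {t : ℝ} {a b : V}
    (hab : sConn G (LPF f r p L ε) t a b) : sConn G f t a b := by
  refine Relation.ReflTransGen.mono ?_ _ _ hab
  intro x y ⟨e, he, hxy⟩
  refine ⟨e, le_trans ?_ he, hxy⟩
  exact max_le (le_trans (lpf_ge_f _) (le_max_left _ _))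
    (le_trans (lpf_ge_f _) (le_max_right _ _))

/-- Step 3: components of the LPF sublevel graph at level `t` meeting `{g ≤ s}`
biject with the high-persistence vertices born by `s` and alive at `t`. -/
lemma count_high (hbht : G.IsBHT f pos r p L) (s t : ℝ) (hst : s ≤ t) :
    (Finset.univ.filter fun v => (ε : EReal) ≤ persBHT f r L v ∧ f v ≤ s ∧
        (t : EReal) < fLink f r L v).card
      = Nat.card (Quotient (lowSetoid G (LPF f r p L ε) s t)) := by
  classical
  set g := LPF f r p L ε with hg
  set A := Finset.univ.filter fun v => (ε : EReal) ≤ persBHT f r L v ∧ f v ≤ s ∧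
      (t : EReal) < fLink f r L v with hA
  have hmemA : ∀ v, v ∈ A ↔ (ε : EReal) ≤ persBHT f r L v ∧ f v ≤ s ∧
      (t : EReal) < fLink f r L v := by intro v; simp [hA]
  have hgs : ∀ v, v ∈ A → g v ≤ s := fun v hv => by
    rw [hg, lpf_eq_f_of_high hbht ((hmemA v).mp hv).1]
    exact ((hmemA v).mp hv).2.1
  let ψ : {x // x ∈ A} → Quotient (lowSetoid G g s t) := fun x =>
    Quotient.mk _ ⟨x.1, hgs x.1 x.2⟩
  have hbij : Function.Bijective ψ := by
    constructor
    · rintro ⟨x, hx⟩ ⟨y, hy⟩ hxy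
      have hrel : sConn G g t x y := Quotient.exact hxy
      have hrelf : sConn G f t x y := sConn_lpf_to_f hrel
      obtain ⟨hxS, hxs, hxd⟩ := (hmemA x).mp hx
      obtain ⟨hyS, hys, hyd⟩ := (hmemA y).mp hy
      have hconn : G.ConnB pos (stageK G f pos t) x y :=
        sConn_to_connB hbht.ordering (le_trans hxs hst) (le_trans hys hst) hrelf
      have hxd' : (t : EReal) < G.deathVal f pos x := by
        rw [deathVal_eq_fLink hbht]; exact hxd
      have hyd' : (t : EReal) < G.deathVal f pos y := by
        rw [deathVal_eq_fLink hbht]; exact hyd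
      have hxmin := (deathVal_lt_iff hbht.ordering (le_trans hxs hst)).mp hxd'
      have hymin := (deathVal_lt_iff hbht.ordering (le_trans hys hst)).mp hyd'
      exact Subtype.ext (compMin_unique hxmin hymin hconn hbht.ordering.1)
    · intro c
      obtain ⟨⟨x, hx⟩, rfl⟩ := Quotient.exists_rep c
      -- find the first ancestor of x with death value above t
      have hex : ∃ i, (t : EReal) < fLink f r L (p^[i] x) := by
        obtain ⟨n, hn⟩ := hbht.reaches x
        refine ⟨n, ?_⟩
        rw [hn, fLink, if_pos rfl]
        exact EReal.coe_lt_top t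
      set i := Nat.find hex with hi
      set v := p^[i] x with hv
      have hvd : (t : EReal) < fLink f r L v := Nat.find_spec hex
      have hnotle : ∀ j < i, fLink f r L (p^[j] x) ≤ (t : EReal) := fun j hj =>
        le_of_not_gt (Nat.find_min hex hj)
      have hanc : Anc p v x := ⟨i, rfl⟩
      have hgx : g x ≤ t := le_trans hx hst
      have hvS : (ε : EReal) ≤ persBHT f r L v := by
        by_contra hcon
        push_neg at hcon
        have hvr : v ≠ r := ne_root_of_pers_lt hcon
        have h1 : f (L v) ≤ g x := lpf_ge_link hanc hcon
        rw [fLink, if_neg hvr] at hvd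
        have h2 : t < f (L v) := EReal.coe_lt_coe_iff.mp hvd
        linarith
      have hfv : f v ≤ s := le_trans (f_anc_le hbht hanc) (le_trans (lpf_ge_f x) hx)
      refine ⟨⟨v, (hmemA v).mpr ⟨hvS, hfv, hvd⟩⟩, ?_⟩
      apply Quotient.sound
      exact sConn_symm (claimB hbht i x hnotle hgx)
  calc A.card = Nat.card {x // x ∈ A} := by
        rw [Nat.card_eq_fintype_card, Fintype.card_coe]
    _ = Nat.card (Quotient (lowSetoid G g s t)) := Nat.card_eq_of_bijective ψ hbij

end AuxStep3
section AuxRecon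

open Multiset

lemma card_filter_split {α : Type*} (P : Multiset α) (Pr Q : α → Prop)
    [DecidablePred Pr] [DecidablePred Q] :
    Multiset.card (P.filter Pr) =
      Multiset.card (P.filter fun a => Pr a ∧ Q a) +
      Multiset.card (P.filter fun a => Pr a ∧ ¬ Q a) := by
  classical
  conv_lhs => rw [← Multiset.filter_add_not Q P]
  rw [Multiset.filter_add, Multiset.card_add, Multiset.filter_filter, Multiset.filter_filter]

/-- A multiset of nontrivial intervals with real birth is determined by its
counting function. -/
lemma multiset_eq_of_counts {M M' : Multiset (EReal × EReal)}
    (hM : ∀ ab ∈ M, (∃ x : ℝ, ab.1 = (x : EReal)) ∧ ab.1 < ab.2)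
    (hM' : ∀ ab ∈ M', (∃ x : ℝ, ab.1 = (x : EReal)) ∧ ab.1 < ab.2)
    (hc : ∀ s t : ℝ, s ≤ t →
      Multiset.card (M.filter fun ab => ab.1 ≤ (s : EReal) ∧ (t : EReal) < ab.2) =
      Multiset.card (M'.filter fun ab => ab.1 ≤ (s : EReal) ∧ (t : EReal) < ab.2)) :
    M = M' := by
  classical
  ext x
  obtain ⟨a, b⟩ := x
  by_cases hshape : (∃ y : ℝ, a = (y : EReal)) ∧ a < b
  swap
  · rw [Multiset.count_eq_zero_of_notMem, Multiset.count_eq_zero_of_notMem]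
    · intro hmem; exact hshape (hM' _ hmem)
    · intro hmem; exact hshape (hM _ hmem)
  obtain ⟨⟨r₀, rfl⟩, hab⟩ := hshape
  set N := M + M' with hN
  have hNshape : ∀ ab ∈ N, (∃ y : ℝ, ab.1 = (y : EReal)) ∧ ab.1 < ab.2 := by
    intro ab hab'
    rcases Multiset.mem_add.mp hab' with h | h
    · exact hM ab h
    · exact hM' ab h
  -- choose s' just below r₀
  set Fb : Finset ℝ := insert (r₀ - 1)
    ((N.toFinset.filter fun ab => ab.1 < (r₀ : EReal)).image fun ab => ab.1.toReal) with hFb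
  set s' : ℝ := Fb.max' ⟨r₀ - 1, Finset.mem_insert_self _ _⟩ with hs'
  have hs'lt : s' < r₀ := by
    have hmem := Finset.max'_mem Fb ⟨r₀ - 1, Finset.mem_insert_self _ _⟩
    rw [← hs'] at hmem
    rcases Finset.mem_insert.mp hmem with h | h
    · rw [h]; linarith
    · obtain ⟨ab, habm, habe⟩ := Finset.mem_image.mp h
      obtain ⟨habN, hablt⟩ := Finset.mem_filter.mp habm
      obtain ⟨⟨y, hy⟩, _⟩ := hNshape ab (Multiset.mem_toFinset.mp habN)
      rw [← habe, hy]
      simp only [EReal.toReal_coe]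
      rw [hy] at hablt
      exact EReal.coe_lt_coe_iff.mp hablt
  have hs'prop : ∀ ab ∈ N, ab.1 < (r₀ : EReal) → ab.1 ≤ (s' : EReal) := by
    intro ab habN hlt
    obtain ⟨⟨y, hy⟩, _⟩ := hNshape ab habN
    have : y ∈ Fb := by
      refine Finset.mem_insert_of_mem (Finset.mem_image.mpr ⟨ab, ?_, by rw [hy]; simp⟩)
      exact Finset.mem_filter.mpr ⟨Multiset.mem_toFinset.mpr habN, hlt⟩
    rw [hy]
    exact EReal.coe_le_coe_iff.mpr (Finset.le_max' _ _ this)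
  have hbirth_eq : ∀ ab ∈ N,
      (ab.1 ≤ (r₀ : EReal) ∧ ¬ ab.1 ≤ (s' : EReal)) ↔ ab.1 = ((r₀ : ℝ) : EReal) := by
    intro ab habN
    constructor
    · rintro ⟨h1, h2⟩
      rcases lt_or_eq_of_le h1 with h | h
      · exact absurd (hs'prop ab habN h) h2
      · exact h
    · intro h
      rw [h]
      exact ⟨le_refl _, fun hcon =>
        absurd (EReal.coe_le_coe_iff.mp hcon) (not_le.mpr hs'lt)⟩
  -- the key birth-splitting identity
  have key : ∀ (P : Multiset (EReal × EReal)), (∀ ab ∈ P, ab ∈ N) → ∀ u : ℝ,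
      Multiset.card (P.filter fun ab => ab.1 ≤ (r₀ : EReal) ∧ (u : EReal) < ab.2) =
      Multiset.card (P.filter fun ab => ab.1 ≤ (s' : EReal) ∧ (u : EReal) < ab.2) +
      Multiset.card (P.filter fun ab => ab.1 = ((r₀ : ℝ) : EReal) ∧ (u : EReal) < ab.2) := by
    intro P hP u
    rw [card_filter_split P _ (fun ab => ab.1 ≤ (s' : EReal))]
    congr 1
    · refine congrArg _ (Multiset.filter_congr fun ab hab' => ?_)
      constructor
      · rintro ⟨⟨_, h2⟩, h3⟩; exact ⟨h3, h2⟩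
      · rintro ⟨h3, h2⟩
        refine ⟨⟨le_trans h3 ?_, h2⟩, h3⟩
        exact le_of_lt (EReal.coe_lt_coe_iff.mpr hs'lt)
    · refine congrArg _ (Multiset.filter_congr fun ab hab' => ?_)
      constructor
      · rintro ⟨⟨h1, h2⟩, h3⟩
        exact ⟨(hbirth_eq ab (hP ab hab')).mp ⟨h1, h3⟩, h2⟩
      · rintro ⟨h1, h2⟩
        obtain ⟨h3, h4⟩ := (hbirth_eq ab (hP ab hab')).mpr h1
        exact ⟨⟨h3, h2⟩, h4⟩
  -- choose t₁ just below b (and at least r₀)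
  set Ft : Finset ℝ := insert r₀
    ((N.toFinset.filter fun ab => ab.2 < b).image fun ab => ab.2.toReal) with hFt
  set t₁ : ℝ := Ft.max' ⟨r₀, Finset.mem_insert_self _ _⟩ with ht₁
  have hdeath_ne : ∀ ab ∈ N, ab.2 < b → ((ab.2.toReal : ℝ) : EReal) = ab.2 := by
    intro ab habN hlt
    obtain ⟨⟨y, hy⟩, hlt2⟩ := hNshape ab habN
    refine EReal.coe_toReal (ne_top_of_lt (lt_of_lt_of_le hlt le_top)) ?_
    · intro hbot
      rw [hbot, hy] at hlt2
      exact (EReal.bot_lt_coe y).not_gt hlt2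
  have hr₀t₁ : r₀ ≤ t₁ := Finset.le_max' _ _ (Finset.mem_insert_self _ _)
  have ht₁lt : (t₁ : EReal) < b := by
    have hmem := Finset.max'_mem Ft ⟨r₀, Finset.mem_insert_self _ _⟩
    rw [← ht₁] at hmem
    rcases Finset.mem_insert.mp hmem with h | h
    · rw [h]; exact hab
    · obtain ⟨ab, habm, habe⟩ := Finset.mem_image.mp h
      obtain ⟨habN, hablt⟩ := Finset.mem_filter.mp habm
      rw [← habe, hdeath_ne ab (Multiset.mem_toFinset.mp habN) hablt]
      exact hablt
  have ht₁prop : ∀ ab ∈ N, ab.2 ≤ (t₁ : EReal) ∨ b ≤ ab.2 := by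
    intro ab habN
    by_cases hble : b ≤ ab.2
    · exact Or.inr hble
    · push_neg at hble
      left
      have : ab.2.toReal ∈ Ft := by
        refine Finset.mem_insert_of_mem (Finset.mem_image.mpr ⟨ab, ?_, rfl⟩)
        exact Finset.mem_filter.mpr ⟨Multiset.mem_toFinset.mpr habN, hble⟩
      calc ab.2 = ((ab.2.toReal : ℝ) : EReal) := (hdeath_ne ab habN hble).symm
        _ ≤ (t₁ : EReal) := EReal.coe_le_coe_iff.mpr (Finset.le_max' _ _ this)
  have hMN : ∀ ab ∈ M, ab ∈ N := fun ab h => Multiset.mem_add.mpr (Or.inl h)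
  have hM'N : ∀ ab ∈ M', ab ∈ N := fun ab h => Multiset.mem_add.mpr (Or.inr h)
  have hs't₁ : s' ≤ t₁ := le_trans (le_of_lt hs'lt) hr₀t₁
  -- now split on whether b is ⊤ or real
  induction b with
  | bot => exact absurd hab (by simp)
  | top =>
    -- count = card filter (a = r₀ ∧ t₁ < b)
    have hcount : ∀ (P : Multiset (EReal × EReal)), (∀ ab ∈ P, ab ∈ N) →
        P.count ((r₀ : EReal), (⊤ : EReal)) =
        Multiset.card (P.filter fun ab => ab.1 = ((r₀ : ℝ) : EReal) ∧ (t₁ : EReal) < ab.2) := by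
      intro P hP
      rw [Multiset.count_eq_card_filter_eq]
      refine congrArg _ (Multiset.filter_congr fun ab hab' => ?_)
      constructor
      · rintro rfl
        exact ⟨rfl, EReal.coe_lt_top t₁⟩
      · rintro ⟨h1, h2⟩
        rcases ht₁prop ab (hP ab hab') with h | h
        · exact absurd h2 (not_lt.mpr h)
        · have h4 : ab.2 = ⊤ := top_le_iff.mp h
          rw [Prod.ext_iff]
          exact ⟨h1.symm, h4.symm⟩
    have k1 := key M hMN t₁
    have k2 := key M' hM'N t₁
    rw [hc r₀ t₁ hr₀t₁, hc s' t₁ hs't₁] at k1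
    rw [hcount M hMN, hcount M' hM'N]
    omega
  | coe d₀ =>
    have hr₀d₀ : r₀ < d₀ := EReal.coe_lt_coe_iff.mp hab
    have ht₁d₀ : t₁ < d₀ := EReal.coe_lt_coe_iff.mp ht₁lt
    -- X = Y + count
    have hsplit3 : ∀ (P : Multiset (EReal × EReal)), (∀ ab ∈ P, ab ∈ N) →
        Multiset.card (P.filter fun ab => ab.1 = ((r₀ : ℝ) : EReal) ∧ (t₁ : EReal) < ab.2) =
        Multiset.card (P.filter fun ab => ab.1 = ((r₀ : ℝ) : EReal) ∧ (d₀ : EReal) < ab.2) +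
        P.count ((r₀ : EReal), ((d₀ : ℝ) : EReal)) := by
      intro P hP
      rw [card_filter_split P _ (fun ab => (d₀ : EReal) < ab.2)]
      congr 1
      · refine congrArg _ (Multiset.filter_congr fun ab hab' => ?_)
        constructor
        · rintro ⟨⟨h1, _⟩, h3⟩; exact ⟨h1, h3⟩
        · rintro ⟨h1, h3⟩
          exact ⟨⟨h1, lt_trans (EReal.coe_lt_coe_iff.mpr ht₁d₀) h3⟩, h3⟩
      · rw [Multiset.count_eq_card_filter_eq]
        refine congrArg _ (Multiset.filter_congr fun ab hab' => ?_)
        constructor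
        · rintro ⟨⟨h1, h2⟩, h3⟩
          push_neg at h3
          rcases ht₁prop ab (hP ab hab') with h | h
          · exact absurd h2 (not_lt.mpr h)
          · rw [Prod.ext_iff]
            exact ⟨h1.symm, (le_antisymm h3 h).symm⟩
        · rintro rfl
          exact ⟨⟨rfl, EReal.coe_lt_coe_iff.mpr ht₁d₀⟩, not_lt.mpr (le_refl _)⟩
    have k1 := key M hMN t₁
    have k2 := key M' hM'N t₁
    have k3 := key M hMN d₀
    have k4 := key M' hM'N d₀
    have k5 := hsplit3 M hMN
    have k6 := hsplit3 M' hM'N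
    rw [hc r₀ t₁ hr₀t₁, hc s' t₁ hs't₁] at k1
    rw [hc r₀ d₀ (le_of_lt hr₀d₀), hc s' d₀ (le_trans (le_of_lt hs'lt) (le_of_lt hr₀d₀))] at k3
    omega

end AuxRecon
/-- The low-persistence filter removes exactly the low-persistence features:
up to trivial intervals, `PD₀(G, 𝓛₀^ε f)` is the submultiset of `PD₀(G, f)`
of intervals of persistence at least `ε`. -/
theorem lpf_filters_PD0 {V E : Type*} [Fintype V] [Fintype E]
    (G : SrcTgtGraph V E) (hG : G.Connected) (f : V → ℝ) (pos : V ⊕ E → ℕ)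
    (r : V) (p L : V → V) (hbht : G.IsBHT f pos r p L)
    (ε : ℝ) (hε : 0 < ε)
    (g : V → ℝ) (hg : g = LPF f r p L ε)
    (pos' : V ⊕ E → ℕ) (hord : G.IsGOrdering g pos') :
    nontriv (G.PD0 g pos') =
      (G.PD0 f pos).filter
        (fun ab => ab.1 < ab.2 ∧ (ε : EReal) ≤ ab.2 - ab.1) := by
  classical
  subst hg
  apply multiset_eq_of_counts
  · intro ab hab
    rw [nontriv, Multiset.mem_filter] at hab
    obtain ⟨hmem, hlt⟩ := hab
    obtain ⟨v, _, rfl⟩ := Multiset.mem_map.mp hmem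
    exact ⟨⟨_, rfl⟩, hlt⟩
  · intro ab hab
    rw [Multiset.mem_filter] at hab
    obtain ⟨hmem, hlt, _⟩ := hab
    obtain ⟨v, _, rfl⟩ := Multiset.mem_map.mp hmem
    exact ⟨⟨_, rfl⟩, hlt⟩
  · intro s t hst
    have hstE : (s : EReal) ≤ (t : EReal) := EReal.coe_le_coe_iff.mpr hst
    -- left side
    have hL : Multiset.card
        ((nontriv (G.PD0 (LPF f r p L ε) pos')).filter fun ab =>
          ab.1 ≤ (s : EReal) ∧ (t : EReal) < ab.2)
        = (Finset.univ.filter fun v => LPF f r p L ε v ≤ s ∧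
            (t : EReal) < G.deathVal (LPF f r p L ε) pos' v).card := by
      rw [nontriv, Multiset.filter_filter]
      rw [Multiset.filter_congr (q := fun ab : EReal × EReal =>
        ab.1 ≤ (s : EReal) ∧ (t : EReal) < ab.2)
        (fun ab _ => ⟨fun h => h.1, fun h =>
          ⟨h, lt_of_le_of_lt (le_trans h.1 hstE) h.2⟩⟩)]
      rw [SrcTgtGraph.PD0, Multiset.filter_map, Multiset.card_map]
      rw [Multiset.filter_congr (q := fun v : V => LPF f r p L ε v ≤ s ∧
            (t : EReal) < G.deathVal (LPF f r p L ε) pos' v)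
        (fun v _ => by
          simp only [Function.comp]
          rw [EReal.coe_le_coe_iff])]
      rfl
    -- right side
    have hR : Multiset.card
        (((G.PD0 f pos).filter fun ab => ab.1 < ab.2 ∧ (ε : EReal) ≤ ab.2 - ab.1).filter
          fun ab => ab.1 ≤ (s : EReal) ∧ (t : EReal) < ab.2)
        = (Finset.univ.filter fun v => (ε : EReal) ≤ persBHT f r L v ∧ f v ≤ s ∧
            (t : EReal) < fLink f r L v).card := by
      rw [Multiset.filter_filter, SrcTgtGraph.PD0, Multiset.filter_map, Multiset.card_map]
      rw [Multiset.filter_congr (q := fun v : V => (ε : EReal) ≤ persBHT f r L v ∧ f v ≤ s ∧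
            (t : EReal) < fLink f r L v)
        (fun v _ => by
          simp only [Function.comp]
          rw [deathVal_eq_fLink hbht, EReal.coe_le_coe_iff]
          constructor
          · rintro ⟨⟨h1, h2⟩, h3, h4⟩
            exact ⟨h4, h1, h2⟩
          · rintro ⟨h1, h2, h3⟩
            refine ⟨⟨h2, h3⟩, ?_, h1⟩
            by_cases hvr : v = r
            · rw [fLink, if_pos hvr]
              exact EReal.coe_lt_top _
            · rw [fLink, if_neg hvr]
              rw [EReal.coe_lt_coe_iff]
              have := (pers_le_iff hvr).mp h1
              linarith)]
      rfl
    rw [hL, hR, count_death hord s t hst, count_high hbht s t hst]
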